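/- A binary phylogenetic network in which every blob has level 1 (i.e., a level-1 network) is tree-child if and only if no reticulation node has a reticulation node as a child; moreover, every binary level-1 network is orchard. -/

import Mathlib

/-- A (directed) phylogenetic-network-like graph on a finite set of
natural-number labelled vertices. -/
structure PNet where
  verts : Finset ℕ
  adj : ℕ → ℕ → Prop
  adjDec : DecidableRel adj
  adj_mem : ∀ u v, adj u v → u ∈ verts ∧ v ∈ verts

attribute [instance] PNet.adjDec

namespace PNet

/-- In-degree of a vertex. -/
def indeg (N : PNet) (v : ℕ) : ℕ := (N.verts.filter fun u => N.adj u v).card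

/-- Out-degree of a vertex. -/
def outdeg (N : PNet) (v : ℕ) : ℕ := (N.verts.filter fun w => N.adj v w).card

/-- A leaf is a vertex of out-degree 0. -/
def IsLeaf (N : PNet) (v : ℕ) : Prop := v ∈ N.verts ∧ N.outdeg v = 0

/-- A reticulation node is a vertex of in-degree 2. -/
def IsRetic (N : PNet) (v : ℕ) : Prop := v ∈ N.verts ∧ N.indeg v = 2

/-- A root is a vertex of in-degree 0. -/
def IsRoot (N : PNet) (v : ℕ) : Prop := v ∈ N.verts ∧ N.indeg v = 0

/-- The digraph is acyclic. -/
def Acyclic (N : PNet) : Prop := ∀ v, ¬ Relation.TransGen N.adj v v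

/-- A binary (rooted) phylogenetic network: acyclic, a root of in-degree 0 and
out-degree 2 from which all vertices are reachable, and every other vertex is a
tree node (in 1, out 2), a reticulation node (in 2, out 1) or a leaf (in 1, out 0). -/
def IsBinary (N : PNet) : Prop :=
  N.Acyclic ∧ ∃ ρ, N.IsRoot ρ ∧ N.outdeg ρ = 2 ∧
    (∀ v ∈ N.verts, Relation.ReflTransGen N.adj ρ v) ∧
    (∀ v ∈ N.verts, v ≠ ρ →
      (N.indeg v = 1 ∧ N.outdeg v = 2) ∨ (N.indeg v = 2 ∧ N.outdeg v = 1) ∨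
      (N.indeg v = 1 ∧ N.outdeg v = 0))

/-- Tree-child: every internal node has a child that is not a reticulation. -/
def TreeChild (N : PNet) : Prop :=
  ∀ v ∈ N.verts, N.outdeg v ≠ 0 → ∃ c, N.adj v c ∧ N.indeg c ≠ 2

/-- Stack-free: no edge joins two reticulation nodes. -/
def StackFree (N : PNet) : Prop :=
  ∀ u v, N.adj u v → ¬ (N.indeg u = 2 ∧ N.indeg v = 2)

end PNet

namespace PNet

/-- Underlying undirected adjacency. -/
def USym (N : PNet) (u v : ℕ) : Prop := N.adj u v ∨ N.adj v u

/-- An (undirected) edge `{a,b}` is a cut edge if its endpoints are not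
connected in the underlying undirected graph with that edge removed. -/
def IsCutEdge (N : PNet) (a b : ℕ) : Prop :=
  N.USym a b ∧
    ¬ Relation.ReflTransGen
        (fun u v => N.USym u v ∧ ¬ ((u = a ∧ v = b) ∨ (u = b ∧ v = a))) a b

/-- Adjacency within cut-edge-free parts of the underlying undirected graph. -/
def BlobAdj (N : PNet) (u v : ℕ) : Prop := N.USym u v ∧ ¬ N.IsCutEdge u v

/-- The maximal cut-edge-free connected subgraph containing `v`. -/
def BlobOf (N : PNet) (v : ℕ) : Set ℕ :=
  {u | u ∈ N.verts ∧ Relation.ReflTransGen N.BlobAdj v u}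

/-- The blobs of `N`: maximal connected cut-edge-free subgraphs with at least
two nodes. -/
def Blobs (N : PNet) : Set (Set ℕ) :=
  {B | ∃ v ∈ N.verts, B = N.BlobOf v ∧ 2 ≤ B.ncard}

/-- The level of a blob: the number of reticulation nodes it contains. -/
noncomputable def blobLevel (N : PNet) (B : Set ℕ) : ℕ := Set.ncard {v ∈ B | N.IsRetic v}

end PNet

namespace PNet

/-- Cherry reduction: for a cherry `(x,y)` (two leaves with common parent `p`),
delete `y` and suppress the resulting degree-two node `p` (when `p` is not the
root). -/
def CherryPick (N N' : PNet) : Prop :=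
  ∃ x y p, x ≠ y ∧ N.IsLeaf x ∧ N.IsLeaf y ∧ N.adj p x ∧ N.adj p y ∧
    ((N.indeg p = 0 ∧ N'.verts = N.verts \ {y} ∧
        ∀ u v, N'.adj u v ↔ (N.adj u v ∧ v ≠ y)) ∨
     (∃ q, N.adj q p ∧ N'.verts = N.verts \ {y, p} ∧
        ∀ u v, N'.adj u v ↔
          ((N.adj u v ∧ u ≠ p ∧ v ≠ p ∧ v ≠ y) ∨ (u = q ∧ v = x))))

/-- Reticulated cherry reduction: leaves `x` and `y`, the parent `w` of `x` is
a reticulation, and a tree node `p` is a common parent of `y` and `w`.  Delete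
the hybrid edge `(p,w)` and suppress the resulting degree-two nodes. -/
def RetCherryPick (N N' : PNet) : Prop :=
  ∃ x y w p, x ≠ y ∧ N.IsLeaf x ∧ N.IsLeaf y ∧
    N.adj w x ∧ N.indeg w = 2 ∧ N.adj p w ∧ N.adj p y ∧ N.indeg p ≤ 1 ∧
    ∃ q', q' ≠ p ∧ N.adj q' w ∧
    ((N.indeg p = 0 ∧ N'.verts = N.verts \ {w} ∧
        ∀ u v, N'.adj u v ↔
          ((N.adj u v ∧ u ≠ w ∧ v ≠ w) ∨ (u = q' ∧ v = x))) ∨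
     (∃ q, N.adj q p ∧ N'.verts = N.verts \ {w, p} ∧
        ∀ u v, N'.adj u v ↔
          ((N.adj u v ∧ u ≠ w ∧ v ≠ w ∧ u ≠ p ∧ v ≠ p) ∨
            (u = q' ∧ v = x) ∨ (u = q ∧ v = y))))

/-- One cherry or reticulated-cherry reduction step. -/
def Reduce (N N' : PNet) : Prop := N.CherryPick N' ∨ N.RetCherryPick N'

/-- The trivial network: a root with a single leaf child. -/
def IsTrivialNet (T : PNet) : Prop :=
  ∃ r l, r ≠ l ∧ T.verts = {r, l} ∧ ∀ u v, (T.adj u v ↔ (u = r ∧ v = l))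

/-- Orchard: reducible to the trivial network by cherry and
reticulated-cherry reductions. -/
def Orchard (N : PNet) : Prop :=
  ∃ T, IsTrivialNet T ∧ Relation.ReflTransGen Reduce N T

end PNet
namespace PNet

open Relation

variable {N : PNet}

lemma mem_left {u v : ℕ} (h : N.adj u v) : u ∈ N.verts := (N.adj_mem u v h).1
lemma mem_right {u v : ℕ} (h : N.adj u v) : v ∈ N.verts := (N.adj_mem u v h).2

lemma outdeg_ne_zero {u v : ℕ} (h : N.adj u v) : N.outdeg u ≠ 0 := by
  have : v ∈ N.verts.filter fun w => N.adj u w := by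
    simp [Finset.mem_filter, mem_right h, h]
  intro h0
  have := Finset.card_eq_zero.mp h0
  simp [outdeg] at h0
  rw [this] at ‹v ∈ _›
  exact absurd ‹v ∈ (∅ : Finset ℕ)› (by simp)

lemma indeg_ne_zero {u v : ℕ} (h : N.adj u v) : N.indeg v ≠ 0 := by
  have hm : u ∈ N.verts.filter fun w => N.adj w v := by
    simp [Finset.mem_filter, mem_left h, h]
  intro h0
  rw [indeg, Finset.card_eq_zero] at h0
  rw [h0] at hm; simp at hm

lemma not_adj_of_outdeg_zero {u : ℕ} (h : N.outdeg u = 0) {v : ℕ} : ¬ N.adj u v :=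
  fun ha => outdeg_ne_zero ha h

lemma adj_ne (hA : N.Acyclic) {u v : ℕ} (h : N.adj u v) : u ≠ v := by
  rintro rfl; exact hA u (TransGen.single h)

lemma not_reach_back (hA : N.Acyclic) {u v : ℕ} (h : N.adj u v) :
    ¬ ReflTransGen N.adj v u :=
  fun hr => hA v (TransGen.trans_right hr (TransGen.single h))

lemma reach_trans_adj (hA : N.Acyclic) {a u v : ℕ} (h : N.adj u v)
    (hr : ReflTransGen N.adj v a) : ¬ ReflTransGen N.adj a u := fun h2 =>
  not_reach_back hA h (hr.trans h2)

lemma parent_unique {v q : ℕ} (h1 : N.indeg v = 1) (hq : N.adj q v) {a : ℕ}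
    (ha : N.adj a v) : a = q := by
  have hqm : q ∈ N.verts.filter fun u => N.adj u v := by simp [mem_left hq, hq]
  have ham : a ∈ N.verts.filter fun u => N.adj u v := by simp [mem_left ha, ha]
  exact Finset.card_le_one.mp (le_of_eq h1) _ ham _ hqm

lemma exists_other_parent {v u : ℕ} (h2 : N.indeg v = 2) (hu : N.adj u v) :
    ∃ q, q ≠ u ∧ N.adj q v := by
  classical
  have hum : u ∈ N.verts.filter fun w => N.adj w v := by simp [mem_left hu, hu]
  have : ((N.verts.filter fun w => N.adj w v).erase u).card = 1 := by
    rw [Finset.card_erase_of_mem hum, indeg] at *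
    omega
  obtain ⟨q, hq⟩ := Finset.card_eq_one.mp this
  have : q ∈ (N.verts.filter fun w => N.adj w v).erase u := by simp [hq]
  refine ⟨q, (Finset.mem_erase.mp this).1, (Finset.mem_filter.mp (Finset.mem_of_mem_erase this)).2⟩

lemma exists_child {v : ℕ} (h : N.outdeg v ≠ 0) : ∃ c, N.adj v c := by
  obtain ⟨c, hc⟩ := Finset.card_ne_zero.mp h
  exact ⟨c, (Finset.mem_filter.mp hc).2⟩

lemma children_pair {v : ℕ} (h : N.outdeg v = 2) :
    ∃ a b, a ≠ b ∧ N.adj v a ∧ N.adj v b ∧ ∀ c, N.adj v c → c = a ∨ c = b := by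
  obtain ⟨a, b, hab, hs⟩ := Finset.card_eq_two.mp h
  have ha : a ∈ N.verts.filter fun w => N.adj v w := by rw [hs]; simp
  have hb : b ∈ N.verts.filter fun w => N.adj v w := by rw [hs]; simp
  refine ⟨a, b, hab, (Finset.mem_filter.mp ha).2, (Finset.mem_filter.mp hb).2, fun c hc => ?_⟩
  have : c ∈ N.verts.filter fun w => N.adj v w := by simp [mem_right hc, hc]
  rw [hs] at this; simpa using this

lemma child_unique {v x : ℕ} (h1 : N.outdeg v = 1) (hx : N.adj v x) {c : ℕ}
    (hc : N.adj v c) : c = x := by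
  have hxm : x ∈ N.verts.filter fun w => N.adj v w := by simp [mem_right hx, hx]
  have hcm : c ∈ N.verts.filter fun w => N.adj v w := by simp [mem_right hc, hc]
  exact Finset.card_le_one.mp (le_of_eq h1) _ hcm _ hxm

end PNet
namespace PNet

lemma card_swap {s t : Finset ℕ} {p x : ℕ} (hpx : p ≠ x) (hp : p ∈ s) (hx : x ∉ s)
    (hxt : x ∈ t) (hpt : p ∉ t) (hother : ∀ c, c ≠ p → c ≠ x → (c ∈ s ↔ c ∈ t)) :
    t.card = s.card := by
  have ht : t = insert x (s.erase p) := by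
    ext c
    rw [Finset.mem_insert, Finset.mem_erase]
    by_cases hc1 : c = x
    · subst hc1; simp [hxt]
    · by_cases hc2 : c = p
      · subst hc2
        simp only [hc1, false_or]
        exact iff_of_false hpt (fun h => h.1 rfl)
      · rw [← hother c hc2 hc1]
        simp [hc1, hc2]
  have hxe : x ∉ s.erase p := fun h => hx (Finset.mem_of_mem_erase h)
  rw [ht, Finset.card_insert_of_notMem hxe, Finset.card_erase_of_mem hp]
  have := Finset.card_pos.mpr ⟨p, hp⟩
  omega

lemma card_swap2 {s t : Finset ℕ} {p w x y : ℕ} (hpw : p ≠ w) (hxy : x ≠ y)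
    (hpx : p ≠ x) (hpy : p ≠ y) (hwx : w ≠ x) (hwy : w ≠ y)
    (hp : p ∈ s) (hw : w ∈ s) (hx : x ∉ s) (hy : y ∉ s)
    (hxt : x ∈ t) (hyt : y ∈ t) (hpt : p ∉ t) (hwt : w ∉ t)
    (hother : ∀ c, c ≠ p → c ≠ w → c ≠ x → c ≠ y → (c ∈ s ↔ c ∈ t)) :
    t.card = s.card := by
  have ht : t = insert x (insert y ((s.erase p).erase w)) := by
    ext c
    rw [Finset.mem_insert, Finset.mem_insert, Finset.mem_erase, Finset.mem_erase]
    by_cases hc1 : c = x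
    · subst hc1; simp [hxt]
    · by_cases hc2 : c = y
      · subst hc2; simp [hyt]
      · by_cases hc3 : c = p
        · subst hc3
          simp only [hc1, hc2, false_or]
          exact iff_of_false hpt (fun h => h.2.1 rfl)
        · by_cases hc4 : c = w
          · subst hc4
            simp only [hc1, hc2, false_or]
            exact iff_of_false hwt (fun h => h.1 rfl)
          · rw [← hother c hc3 hc4 hc1 hc2]
            simp [hc1, hc2, hc3, hc4]
  have h1 : w ∈ s.erase p := Finset.mem_erase.mpr ⟨hpw.symm, hw⟩
  have hye : y ∉ (s.erase p).erase w :=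
    fun h => hy (Finset.mem_of_mem_erase (Finset.mem_of_mem_erase h))
  have hxe : x ∉ insert y ((s.erase p).erase w) := by
    rw [Finset.mem_insert]
    rintro (h | h)
    · exact hxy h
    · exact hx (Finset.mem_of_mem_erase (Finset.mem_of_mem_erase h))
  rw [ht, Finset.card_insert_of_notMem hxe, Finset.card_insert_of_notMem hye,
    Finset.card_erase_of_mem h1, Finset.card_erase_of_mem hp]
  have h2 := Finset.card_pos.mpr ⟨p, hp⟩
  have h3 := Finset.one_lt_card.mpr ⟨p, hp, w, hw, hpw⟩
  omega

end PNet
namespace PNet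

open Relation
open scoped Classical

variable {N : PNet}

/-- Height: number of vertices reachable from v (including v itself). -/
noncomputable def ht (N : PNet) (v : ℕ) : ℕ :=
  (N.verts.filter fun u => ReflTransGen N.adj v u).card

lemma ht_pos {v : ℕ} (hv : v ∈ N.verts) : 1 ≤ N.ht v := by
  have : v ∈ N.verts.filter fun u => ReflTransGen N.adj v u := by
    simp [hv, ReflTransGen.refl]
  exact Finset.card_pos.mpr ⟨v, this⟩

lemma ht_lt (hA : N.Acyclic) {v c : ℕ} (h : N.adj v c) : N.ht c < N.ht v := by
  apply Finset.card_lt_card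
  constructor
  · intro u hu
    simp only [Finset.mem_filter] at hu ⊢
    exact ⟨hu.1, ReflTransGen.head h hu.2⟩
  · intro hsub
    have hv : v ∈ N.verts.filter fun u => ReflTransGen N.adj v u := by
      simp [mem_left h, ReflTransGen.refl]
    have := hsub hv
    simp only [Finset.mem_filter] at this
    exact not_reach_back hA h this.2

lemma ht_leaf {v : ℕ} (hv : v ∈ N.verts) (h : N.outdeg v = 0) : N.ht v = 1 := by
  have : (N.verts.filter fun u => ReflTransGen N.adj v u) = {v} := by
    ext u
    simp only [Finset.mem_filter, Finset.mem_singleton]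
    constructor
    · rintro ⟨hu, hr⟩
      cases (ReflTransGen.cases_head hr) with
      | inl h' => exact h'.symm
      | inr h' => obtain ⟨c, hc, -⟩ := h'; exact absurd hc (not_adj_of_outdeg_zero h)
    · rintro rfl; exact ⟨hv, ReflTransGen.refl⟩
  rw [ht, this, Finset.card_singleton]

lemma leaf_of_ht_le_one {v : ℕ} (hA : N.Acyclic) (h : N.ht v ≤ 1) : N.outdeg v = 0 := by
  by_contra h0
  obtain ⟨c, hc⟩ := exists_child h0
  have hvm : v ∈ N.verts.filter fun u => ReflTransGen N.adj v u := by
    simp [mem_left hc, ReflTransGen.refl]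
  have hcm : c ∈ N.verts.filter fun u => ReflTransGen N.adj v u := by
    simp [mem_right hc, ReflTransGen.single hc]
  have h2 : ({v, c} : Finset ℕ) ⊆ N.verts.filter fun u => ReflTransGen N.adj v u := by
    intro z hz; simp at hz; rcases hz with rfl | rfl <;> assumption
  have h3 := Finset.card_le_card h2
  rw [Finset.card_insert_of_notMem (by simp [adj_ne hA hc]), Finset.card_singleton] at h3
  rw [ht] at h
  omega

lemma ht_retic {w x : ℕ} (hA : N.Acyclic) (h1 : N.outdeg w = 1) (hx : N.adj w x)
    (hxl : N.outdeg x = 0) : N.ht w = 2 := by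
  have hset : (N.verts.filter fun u => ReflTransGen N.adj w u) = {w, x} := by
    ext u
    simp only [Finset.mem_filter, Finset.mem_insert, Finset.mem_singleton]
    constructor
    · rintro ⟨hu, hr⟩
      cases (ReflTransGen.cases_head hr) with
      | inl h' => exact Or.inl h'.symm
      | inr h' =>
        obtain ⟨c, hc, hcr⟩ := h'
        have : c = x := child_unique h1 hx hc
        subst this
        cases (ReflTransGen.cases_head hcr) with
        | inl h'' => exact Or.inr h''.symm
        | inr h'' => obtain ⟨d, hd, -⟩ := h''; exact absurd hd (not_adj_of_outdeg_zero hxl)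
    · rintro (rfl | rfl)
      · exact ⟨mem_left hx, ReflTransGen.refl⟩
      · exact ⟨mem_right hx, ReflTransGen.single hx⟩
  rw [ht, hset, Finset.card_insert_of_notMem (by simp [adj_ne hA hx]), Finset.card_singleton]

lemma ht_tree_ge {c : ℕ} (hA : N.Acyclic) (h : N.outdeg c = 2) : 3 ≤ N.ht c := by
  obtain ⟨a, b, hab, ha, hb, -⟩ := children_pair h
  have hsub : ({c, a, b} : Finset ℕ) ⊆ N.verts.filter fun u => ReflTransGen N.adj c u := by
    intro z hz; simp at hz
    rcases hz with rfl | rfl | rfl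
    · simp [mem_left ha, ReflTransGen.refl]
    · simp [mem_right ha, ReflTransGen.single ha]
    · simp [mem_right hb, ReflTransGen.single hb]
  have hcard : ({c, a, b} : Finset ℕ).card = 3 := by
    rw [Finset.card_insert_of_notMem (by simp [adj_ne hA ha, adj_ne hA hb]),
      Finset.card_insert_of_notMem (by simp [hab]), Finset.card_singleton]
  calc 3 = ({c, a, b} : Finset ℕ).card := hcard.symm
    _ ≤ _ := Finset.card_le_card hsub

end PNet
namespace PNet

open Relation
open scoped Classical

variable {N : PNet}

/-- The relation underlying `IsCutEdge u v`: undirected adjacency avoiding the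
edge `{u,v}`. -/
def EAvoid (N : PNet) (a b : ℕ) (x y : ℕ) : Prop :=
  N.USym x y ∧ ¬ ((x = a ∧ y = b) ∨ (x = b ∧ y = a))

lemma usym_symm {x y : ℕ} (h : N.USym x y) : N.USym y x := by
  rcases h with h | h
  · exact Or.inr h
  · exact Or.inl h

lemma eavoid_symm {a b : ℕ} : Symmetric (N.EAvoid a b) := by
  rintro x y ⟨h1, h2⟩
  refine ⟨usym_symm h1, ?_⟩
  rintro (⟨rfl, rfl⟩ | ⟨rfl, rfl⟩)
  · exact h2 (Or.inr ⟨rfl, rfl⟩)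
  · exact h2 (Or.inl ⟨rfl, rfl⟩)

lemma eavoid_flip {a b x y : ℕ} (h : N.EAvoid a b x y) : N.EAvoid b a x y := by
  refine ⟨h.1, ?_⟩
  rintro (h' | h')
  · exact h.2 (Or.inr h')
  · exact h.2 (Or.inl h')

lemma avoid_path (hA : N.Acyclic) {u v ρ : ℕ} :
    ∀ z, ReflTransGen N.adj ρ z → ¬ ReflTransGen N.adj v z →
      ReflTransGen (N.EAvoid u v) ρ z := by
  intro z hz
  induction hz with
  | refl => intro _; exact ReflTransGen.refl
  | @tail b c hb hbc ih =>
    intro hnc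
    have hnb : ¬ ReflTransGen N.adj v b := fun hr => hnc (hr.tail hbc)
    refine (ih hnb).tail ⟨Or.inl hbc, ?_⟩
    rintro (⟨rfl, rfl⟩ | ⟨rfl, rfl⟩)
    · exact hnc ReflTransGen.refl
    · exact hnb ReflTransGen.refl

lemma retic_parent_path (hA : N.Acyclic) {ρ : ℕ}
    (hreach : ∀ z ∈ N.verts, ReflTransGen N.adj ρ z) {u v : ℕ}
    (huv : N.adj u v) (h2 : N.indeg v = 2) :
    ReflTransGen (N.EAvoid u v) u v := by
  obtain ⟨q, hqu, hqv⟩ := exists_other_parent h2 huv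
  have hpu : ReflTransGen (N.EAvoid u v) ρ u :=
    avoid_path hA u (hreach u (mem_left huv)) (not_reach_back hA huv)
  have hpq : ReflTransGen (N.EAvoid u v) ρ q :=
    avoid_path hA q (hreach q (mem_left hqv)) (not_reach_back hA hqv)
  have hstep : N.EAvoid u v q v := by
    refine ⟨Or.inl hqv, ?_⟩
    rintro (⟨h', -⟩ | ⟨h', h''⟩)
    · exact hqu h'
    · exact adj_ne hA hqv h'
  exact ((@Std.Symm.symm _ _ (@ReflTransGen.stdSymm _ _ ⟨fun _ _ h => eavoid_symm h⟩) _ _ hpu).trans hpq).tail hstep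

lemma blobAdj_of_parent_retic (hA : N.Acyclic) {ρ : ℕ}
    (hreach : ∀ z ∈ N.verts, ReflTransGen N.adj ρ z) {u v : ℕ}
    (huv : N.adj u v) (h2 : N.indeg v = 2) :
    N.BlobAdj u v ∧ N.BlobAdj v u := by
  have hpath := retic_parent_path hA hreach huv h2
  constructor
  · exact ⟨Or.inl huv, fun hcut => hcut.2 (ReflTransGen.mono (fun _ _ h => h) _ _ hpath)⟩
  · refine ⟨Or.inr huv, fun hcut => hcut.2 ?_⟩
    exact ReflTransGen.mono (fun _ _ h => eavoid_flip h) _ _ (@Std.Symm.symm _ _ (@ReflTransGen.stdSymm _ _ ⟨fun _ _ h => eavoid_symm h⟩) _ _ hpath)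

lemma two_retics_false (hlvl : ∀ B ∈ N.Blobs, N.blobLevel B ≤ 1) {x y : ℕ}
    (hx : N.IsRetic x) (hy : N.IsRetic y) (hne : x ≠ y)
    (hconn : ReflTransGen N.BlobAdj x y) : False := by
  have hxB : x ∈ N.BlobOf x := ⟨hx.1, ReflTransGen.refl⟩
  have hyB : y ∈ N.BlobOf x := ⟨hy.1, hconn⟩
  have hBfin : (N.BlobOf x).Finite :=
    Set.Finite.subset N.verts.finite_toSet (fun u hu => hu.1)
  have hsub : ({x, y} : Set ℕ) ⊆ N.BlobOf x := by
    intro z hz; rcases hz with rfl | rfl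
    · exact hxB
    · exact hyB
  have hcard : 2 ≤ (N.BlobOf x).ncard := by
    have := Set.ncard_le_ncard hsub hBfin
    rwa [Set.ncard_pair hne] at this
  have hmem : N.BlobOf x ∈ N.Blobs := ⟨x, hx.1, rfl, hcard⟩
  have hlev := hlvl _ hmem
  have hsub2 : ({x, y} : Set ℕ) ⊆ {v ∈ N.BlobOf x | N.IsRetic v} := by
    intro z hz; rcases hz with rfl | rfl
    · exact ⟨hxB, hx⟩
    · exact ⟨hyB, hy⟩
  have h2 : 2 ≤ N.blobLevel (N.BlobOf x) := by
    have := Set.ncard_le_ncard hsub2 (hBfin.subset (fun z hz => hz.1))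
    rwa [Set.ncard_pair hne] at this
  omega

lemma sf_of_level1 (hbin : N.IsBinary) (hlvl : ∀ B ∈ N.Blobs, N.blobLevel B ≤ 1) :
    N.StackFree := by
  obtain ⟨hA, ρ, hroot, houtρ, hreach, hclass⟩ := hbin
  rintro u v huv ⟨hu2, hv2⟩
  have hb := (blobAdj_of_parent_retic hA hreach huv hv2).1
  exact two_retics_false hlvl ⟨mem_left huv, hu2⟩ ⟨mem_right huv, hv2⟩
    (adj_ne hA huv) (ReflTransGen.single hb)

lemma tc_of_level1 (hbin : N.IsBinary) (hlvl : ∀ B ∈ N.Blobs, N.blobLevel B ≤ 1) :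
    N.TreeChild := by
  obtain ⟨hA, ρ, hroot, houtρ, hreach, hclass⟩ := hbin
  intro v hv hout
  by_contra hcon
  push_neg at hcon
  by_cases h1 : N.outdeg v = 1
  · obtain ⟨c, hc⟩ := exists_child hout
    have hvρ : v ≠ ρ := fun h => by rw [h, houtρ] at h1; omega
    have hv2 : N.indeg v = 2 := by
      rcases hclass v hv hvρ with ⟨_, h⟩ | ⟨h, _⟩ | ⟨_, h⟩ <;> omega
    have hc2 : N.indeg c = 2 := hcon c hc
    have hb := (blobAdj_of_parent_retic hA hreach hc hc2).1
    exact two_retics_false hlvl ⟨hv, hv2⟩ ⟨mem_right hc, hc2⟩ (adj_ne hA hc)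
      (ReflTransGen.single hb)
  · have h2 : N.outdeg v = 2 := by
      by_cases hvρ : v = ρ
      · rw [hvρ]; exact houtρ
      · rcases hclass v hv hvρ with ⟨_, h⟩ | ⟨_, h⟩ | ⟨_, h⟩ <;> omega
    obtain ⟨a, b, hab, ha, hb, -⟩ := children_pair h2
    have ha2 : N.indeg a = 2 := hcon a ha
    have hb2 : N.indeg b = 2 := hcon b hb
    have hba := (blobAdj_of_parent_retic hA hreach ha ha2).2
    have hbb := (blobAdj_of_parent_retic hA hreach hb hb2).1
    exact two_retics_false hlvl ⟨mem_right ha, ha2⟩ ⟨mem_right hb, hb2⟩ hab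
      ((ReflTransGen.single hba).tail hbb)

end PNet
namespace PNet

open Relation
open scoped Classical

variable {N : PNet}

/-- There is a cherry or a reticulated-cherry configuration. -/
def HasRP (N : PNet) : Prop :=
  (∃ x y p, x ≠ y ∧ N.IsLeaf x ∧ N.IsLeaf y ∧ N.adj p x ∧ N.adj p y) ∨
  (∃ x y w p q', x ≠ y ∧ N.IsLeaf x ∧ N.IsLeaf y ∧ N.adj w x ∧ N.indeg w = 2 ∧
    N.adj p w ∧ N.adj p y ∧ N.indeg p ≤ 1 ∧ q' ≠ p ∧ N.adj q' w)

lemma exists_rp (hbin : N.IsBinary) (htc : N.TreeChild) (hsf : N.StackFree) :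
    N.HasRP := by
  obtain ⟨hA, ρ, hroot, houtρ, hreach, hclass⟩ := hbin
  have key : ∀ n v, v ∈ N.verts → N.outdeg v ≠ 0 → N.ht v ≤ n →
      (N.indeg v = 2 → ∃ u, N.adj u v ∧ ∀ c, N.adj u c → N.ht c ≤ N.ht v) →
      N.HasRP := by
    intro n
    induction n with
    | zero => intro v hv _ hht _; have := ht_pos (N := N) hv; omega
    | succ n ih =>
      intro v hv hout hht hpred
      have hne : (N.verts.filter fun w => N.adj v w).Nonempty :=
        Finset.card_ne_zero.mp hout
      obtain ⟨c0, hc0m, hc0max⟩ :=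
        Finset.exists_max_image (N.verts.filter fun w => N.adj v w) N.ht hne
      have hc0 : N.adj v c0 := (Finset.mem_filter.mp hc0m).2
      by_cases hlf : N.outdeg c0 = 0
      · -- all children of v are leaves
        have hallleaf : ∀ c, N.adj v c → N.outdeg c = 0 := by
          intro c hc
          have : N.ht c ≤ N.ht c0 := hc0max c (by simp [mem_right hc, hc])
          rw [ht_leaf (mem_right hc0) hlf] at this
          exact leaf_of_ht_le_one hA this
        by_cases h1 : N.outdeg v = 1
        · -- v is a reticulation with leaf child c0
          have hvρ : v ≠ ρ := fun h => by rw [h, houtρ] at h1; omega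
          have hv2 : N.indeg v = 2 := by
            rcases hclass v hv hvρ with ⟨_, h⟩ | ⟨h, _⟩ | ⟨_, h⟩ <;> omega
          obtain ⟨u, huv, hubd⟩ := hpred hv2
          have hhtv : N.ht v = 2 := ht_retic hA h1 hc0 hlf
          have hu2 : N.indeg u ≠ 2 := fun h => hsf u v huv ⟨h, hv2⟩
          obtain ⟨c, hc, hcind⟩ := htc u (mem_left huv) (outdeg_ne_zero huv)
          have hcρ : c ≠ ρ := fun h => indeg_ne_zero hc (h ▸ hroot.2)
          have hcleaf : N.outdeg c = 0 := by
            rcases hclass c (mem_right hc) hcρ with ⟨-, h⟩ | ⟨h, -⟩ | ⟨-, h⟩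
            · have h3 := ht_tree_ge hA h
              have h4 := hubd c hc
              omega
            · exact absurd h hcind
            · exact h
          have hcw : c ≠ v := fun h => hcind (h ▸ hv2)
          have hxy : c0 ≠ c := by
            intro h
            subst h
            have hc0ρ : c0 ≠ ρ := fun h => indeg_ne_zero hc0 (h ▸ hroot.2)
            have h1' : N.indeg c0 = 1 := by
              rcases hclass c0 (mem_right hc0) hc0ρ with ⟨h, -⟩ | ⟨h, -⟩ | ⟨h, -⟩
              · exact h
              · exact absurd h hcind
              · exact h
            exact adj_ne hA huv (parent_unique h1' hc hc0).symm
          obtain ⟨q', hq'u, hq'v⟩ := exists_other_parent hv2 huv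
          have huρ : N.indeg u ≤ 1 := by
            by_cases h : u = ρ
            · rw [h, hroot.2]; omega
            · rcases hclass u (mem_left huv) h with ⟨h', -⟩ | ⟨h', -⟩ | ⟨h', -⟩ <;> omega
          exact Or.inr ⟨c0, c, v, u, q', hxy, ⟨mem_right hc0, hlf⟩, ⟨mem_right hc, hcleaf⟩,
            hc0, hv2, huv, hc, huρ, hq'u, hq'v⟩
        · -- v is a tree node with two leaf children
          have h2 : N.outdeg v = 2 := by
            by_cases hvρ : v = ρ
            · rw [hvρ]; exact houtρ
            · rcases hclass v hv hvρ with ⟨-, h⟩ | ⟨-, h⟩ | ⟨-, h⟩ <;> omega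
          obtain ⟨a, b, hab, ha, hb, -⟩ := children_pair h2
          exact Or.inl ⟨a, b, v, hab, ⟨mem_right ha, hallleaf a ha⟩,
            ⟨mem_right hb, hallleaf b hb⟩, ha, hb⟩
      · -- recurse into the highest child
        have hlt : N.ht c0 < N.ht v := ht_lt hA hc0
        refine ih c0 (mem_right hc0) hlf (by omega) ?_
        intro h2
        exact ⟨v, hc0, fun c hc => hc0max c (by simp [mem_right hc, hc])⟩
  exact key (N.ht ρ) ρ hroot.1 (by rw [houtρ]; omega) le_rfl
    (fun h => by rw [hroot.2] at h; omega)

end PNet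
namespace PNet

open Relation
open scoped Classical

variable {N : PNet}

lemma children_cases {v x y : ℕ} (h2 : N.outdeg v = 2) (hx : N.adj v x)
    (hy : N.adj v y) (hxy : x ≠ y) : ∀ c, N.adj v c → c = x ∨ c = y := by
  have hsub : ({x, y} : Finset ℕ) ⊆ N.verts.filter fun w => N.adj v w := by
    intro z hz; simp at hz
    rcases hz with rfl | rfl <;> simp [mem_right hx, mem_right hy, hx, hy]
  have hcard : ({x, y} : Finset ℕ).card = 2 := by
    rw [Finset.card_insert_of_notMem (by simp [hxy]), Finset.card_singleton]
  have heq : ({x, y} : Finset ℕ) = N.verts.filter fun w => N.adj v w :=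
    Finset.eq_of_subset_of_card_le hsub (by rw [hcard]; exact h2.le)
  intro c hc
  have : c ∈ ({x, y} : Finset ℕ) := by rw [heq]; simp [mem_right hc, hc]
  simpa using this

lemma parents_cases {v x y : ℕ} (h2 : N.indeg v = 2) (hx : N.adj x v)
    (hy : N.adj y v) (hxy : x ≠ y) : ∀ c, N.adj c v → c = x ∨ c = y := by
  have hsub : ({x, y} : Finset ℕ) ⊆ N.verts.filter fun w => N.adj w v := by
    intro z hz; simp at hz
    rcases hz with rfl | rfl <;> simp [mem_left hx, mem_left hy, hx, hy]
  have hcard : ({x, y} : Finset ℕ).card = 2 := by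
    rw [Finset.card_insert_of_notMem (by simp [hxy]), Finset.card_singleton]
  have heq : ({x, y} : Finset ℕ) = N.verts.filter fun w => N.adj w v :=
    Finset.eq_of_subset_of_card_le hsub (by rw [hcard]; exact h2.le)
  intro c hc
  have : c ∈ ({x, y} : Finset ℕ) := by rw [heq]; simp [mem_left hc, hc]
  simpa using this

lemma cherry_root_case {ρ x y p : ℕ} (hA : N.Acyclic) (hroot : N.IsRoot ρ)
    (houtρ : N.outdeg ρ = 2) (hreach : ∀ z ∈ N.verts, ReflTransGen N.adj ρ z)
    (hclass : ∀ v ∈ N.verts, v ≠ ρ →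
      (N.indeg v = 1 ∧ N.outdeg v = 2) ∨ (N.indeg v = 2 ∧ N.outdeg v = 1) ∨
      (N.indeg v = 1 ∧ N.outdeg v = 0))
    (hxy : x ≠ y) (hlx : N.IsLeaf x) (hly : N.IsLeaf y)
    (hpx : N.adj p x) (hpy : N.adj p y) (hp0 : N.indeg p = 0) : N.Orchard := by
  have hpρ : p = ρ := by
    by_contra hne
    rcases hclass p (mem_left hpx) hne with ⟨h, -⟩ | ⟨h, -⟩ | ⟨h, -⟩ <;> omega
  have hout2 : N.outdeg p = 2 := hpρ ▸ houtρ
  have hch := children_cases hout2 hpx hpy hxy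
  have hpnex : p ≠ x := adj_ne hA hpx
  have hpney : p ≠ y := adj_ne hA hpy
  have hverts : N.verts = {p, x, y} := by
    apply Finset.Subset.antisymm
    · intro z hz
      have hz' : ReflTransGen N.adj ρ z := hreach z hz
      rw [← hpρ] at hz'
      clear hz
      induction hz' with
      | refl => simp
      | @tail b c hb hbc ihb =>
        have hbm : b = p ∨ b = x ∨ b = y := by simpa using ihb
        rcases hbm with rfl | rfl | rfl
        · rcases hch c hbc with rfl | rfl <;> simp
        · exact absurd hbc (not_adj_of_outdeg_zero hlx.2)
        · exact absurd hbc (not_adj_of_outdeg_zero hly.2)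
    · intro z hz
      simp at hz
      rcases hz with rfl | rfl | rfl
      · exact mem_left hpx
      · exact hlx.1
      · exact hly.1
  let T : PNet :=
    { verts := N.verts \ {y}
      adj := fun u v => N.adj u v ∧ v ≠ y
      adjDec := fun u v => instDecidableAnd
      adj_mem := by
        rintro u v ⟨huv, hvy⟩
        constructor
        · simp only [Finset.mem_sdiff, Finset.mem_singleton]
          refine ⟨mem_left huv, ?_⟩
          rintro rfl
          exact not_adj_of_outdeg_zero hly.2 huv
        · simp [Finset.mem_sdiff, mem_right huv, hvy] }
  refine ⟨T, ⟨p, x, hpnex, ?_, ?_⟩, ReflTransGen.single (Or.inl ⟨x, y, p, hxy, hlx, hly,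
    hpx, hpy, Or.inl ⟨hp0, rfl, fun u v => Iff.rfl⟩⟩)⟩
  · show N.verts \ {y} = {p, x}
    rw [hverts]
    ext z
    simp only [Finset.mem_sdiff, Finset.mem_insert, Finset.mem_singleton]
    constructor
    · rintro ⟨rfl | rfl | rfl, h⟩ <;> simp_all
    · rintro (rfl | rfl)
      · exact ⟨by simp, hpney⟩
      · exact ⟨by simp, hxy⟩
  · intro u v
    show N.adj u v ∧ v ≠ y ↔ u = p ∧ v = x
    constructor
    · rintro ⟨huv, hvy⟩
      have hu : u ∈ N.verts := mem_left huv
      rw [hverts] at hu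
      simp at hu
      rcases hu with rfl | rfl | rfl
      · rcases hch v huv with rfl | rfl
        · exact ⟨rfl, rfl⟩
        · exact absurd rfl hvy
      · exact absurd huv (not_adj_of_outdeg_zero hlx.2)
      · exact absurd huv (not_adj_of_outdeg_zero hly.2)
    · rintro ⟨rfl, rfl⟩
      exact ⟨hpx, hxy⟩

end PNet
namespace PNet

open Relation
open scoped Classical

variable {N : PNet}

lemma cherry_step {ρ x y p q : ℕ} (hA : N.Acyclic) (hroot : N.IsRoot ρ)
    (houtρ : N.outdeg ρ = 2) (hreach : ∀ z ∈ N.verts, ReflTransGen N.adj ρ z)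
    (hclass : ∀ v ∈ N.verts, v ≠ ρ →
      (N.indeg v = 1 ∧ N.outdeg v = 2) ∨ (N.indeg v = 2 ∧ N.outdeg v = 1) ∨
      (N.indeg v = 1 ∧ N.outdeg v = 0))
    (htc : N.TreeChild) (hsf : N.StackFree)
    (hxy : x ≠ y) (hlx : N.IsLeaf x) (hly : N.IsLeaf y)
    (hpx : N.adj p x) (hpy : N.adj p y) (hq : N.adj q p) :
    ∃ N' : PNet, N.CherryPick N' ∧ N'.IsBinary ∧ N'.TreeChild ∧ N'.StackFree ∧
      N'.verts.card + 2 = N.verts.card := by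
  -- basic facts
  have hpρ : p ≠ ρ := fun h => indeg_ne_zero hq (h ▸ hroot.2)
  have hxρ : x ≠ ρ := fun h => indeg_ne_zero hpx (h ▸ hroot.2)
  have hyρ : y ≠ ρ := fun h => indeg_ne_zero hpy (h ▸ hroot.2)
  have hp2 : N.outdeg p = 2 := by
    rcases hclass p (mem_left hpx) hpρ with ⟨-, h⟩ | ⟨-, h⟩ | ⟨-, h⟩
    · exact h
    · exact absurd (child_unique h hpx hpy ▸ rfl : y = x) hxy.symm
    · exact absurd hpx (not_adj_of_outdeg_zero h)
  have hp1 : N.indeg p = 1 := by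
    rcases hclass p (mem_left hpx) hpρ with ⟨h, -⟩ | ⟨-, h⟩ | ⟨h, -⟩
    · exact h
    · omega
    · exact h
  have hx1 : N.indeg x = 1 := by
    rcases hclass x hlx.1 hxρ with ⟨h, -⟩ | ⟨h, h'⟩ | ⟨h, -⟩
    · exact h
    · exact absurd hlx.2 (by omega)
    · exact h
  have hy1 : N.indeg y = 1 := by
    rcases hclass y hly.1 hyρ with ⟨h, -⟩ | ⟨h, h'⟩ | ⟨h, -⟩
    · exact h
    · exact absurd hly.2 (by omega)
    · exact h
  have hch := children_cases hp2 hpx hpy hxy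
  have hpar_p : ∀ a, N.adj a p → a = q := fun a ha => parent_unique hp1 hq ha
  have hpar_x : ∀ a, N.adj a x → a = p := fun a ha => parent_unique hx1 hpx ha
  have hpar_y : ∀ a, N.adj a y → a = p := fun a ha => parent_unique hy1 hpy ha
  have hpnx : p ≠ x := adj_ne hA hpx
  have hpny : p ≠ y := adj_ne hA hpy
  have hqnp : q ≠ p := adj_ne hA hq
  have hqny : q ≠ y := fun h => not_adj_of_outdeg_zero hly.2 (h ▸ hq)
  have hqnx : q ≠ x := fun h => not_adj_of_outdeg_zero hlx.2 (h ▸ hq)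
  have hynp : y ≠ p := fun h => hpny h.symm
  have hxnp : x ≠ p := fun h => hpnx h.symm
  -- no vertex other than q is a parent of p etc.
  have hadjmem : ∀ u v, ((N.adj u v ∧ u ≠ p ∧ v ≠ p ∧ v ≠ y) ∨ (u = q ∧ v = x)) →
      u ∈ N.verts \ ({y, p} : Finset ℕ) ∧ v ∈ N.verts \ ({y, p} : Finset ℕ) := by
    rintro u v (⟨huv, hup, hvp, hvy⟩ | ⟨rfl, rfl⟩)
    · refine ⟨?_, ?_⟩ <;> simp only [Finset.mem_sdiff, Finset.mem_insert, Finset.mem_singleton]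
      · exact ⟨mem_left huv, by
          rintro (rfl | rfl)
          · exact not_adj_of_outdeg_zero hly.2 huv
          · exact hup rfl⟩
      · exact ⟨mem_right huv, by rintro (rfl | rfl); exacts [hvy rfl, hvp rfl]⟩
    · refine ⟨?_, ?_⟩ <;> simp only [Finset.mem_sdiff, Finset.mem_insert, Finset.mem_singleton]
      · exact ⟨mem_left hq, by rintro (rfl | rfl); exacts [hqny rfl, hqnp rfl]⟩
      · exact ⟨hlx.1, by rintro (rfl | rfl); exacts [hxy rfl, hxnp rfl]⟩
  obtain ⟨N', hverts', hadj'⟩ : ∃ N' : PNet, N'.verts = N.verts \ ({y, p} : Finset ℕ) ∧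
      ∀ u v, N'.adj u v ↔
        ((N.adj u v ∧ u ≠ p ∧ v ≠ p ∧ v ≠ y) ∨ (u = q ∧ v = x)) :=
    ⟨{ verts := N.verts \ ({y, p} : Finset ℕ)
       adj := fun u v => (N.adj u v ∧ u ≠ p ∧ v ≠ p ∧ v ≠ y) ∨ (u = q ∧ v = x)
       adjDec := fun u v => Classical.propDecidable _
       adj_mem := hadjmem }, rfl, fun _ _ => Iff.rfl⟩
  have hmem' : ∀ z, z ∈ N'.verts ↔ (z ∈ N.verts ∧ z ≠ y ∧ z ≠ p) := by
    intro z
    rw [hverts']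
    simp only [Finset.mem_sdiff, Finset.mem_insert, Finset.mem_singleton]
    tauto
  -- in-degrees
  have hindeg : ∀ v ∈ N'.verts, N'.indeg v = N.indeg v := by
    intro v hv
    rw [hmem'] at hv
    obtain ⟨hvm, hvy, hvp⟩ := hv
    by_cases hvx : v = x
    · rw [hvx, indeg, hx1]
      refine Finset.card_eq_one.mpr ⟨q, ?_⟩
      ext u
      rw [Finset.mem_filter, Finset.mem_singleton, hmem' u, hadj' u x]
      constructor
      · rintro ⟨⟨hum, huy, hup⟩, ⟨huv, -, -, -⟩ | ⟨rfl, -⟩⟩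
        · exact absurd (hpar_x u huv) hup
        · rfl
      · rintro rfl
        exact ⟨⟨mem_left hq, hqny, hqnp⟩, Or.inr ⟨rfl, rfl⟩⟩
    · rw [indeg, indeg]
      apply congrArg Finset.card
      ext u
      rw [Finset.mem_filter, Finset.mem_filter, hmem' u, hadj' u v]
      constructor
      · rintro ⟨⟨hum, -, -⟩, ⟨huv, -, -, -⟩ | ⟨-, rfl⟩⟩
        · exact ⟨hum, huv⟩
        · exact absurd rfl hvx
      · rintro ⟨hum, huv⟩
        have hup : u ≠ p := fun h => by
          rcases hch v (h ▸ huv) with rfl | rfl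
          · exact hvx rfl
          · exact hvy rfl
        have huy : u ≠ y := fun h => not_adj_of_outdeg_zero hly.2 (h ▸ huv)
        exact ⟨⟨hum, huy, hup⟩, Or.inl ⟨huv, hup, hvp, hvy⟩⟩
  -- out-degrees
  have houtdeg : ∀ v ∈ N'.verts, N'.outdeg v = N.outdeg v := by
    intro v hv
    rw [hmem'] at hv
    obtain ⟨hvm, hvy, hvp⟩ := hv
    by_cases hvq : v = q
    · rw [hvq, outdeg, outdeg]
      refine card_swap (p := p) (x := x) hpnx ?_ ?_ ?_ ?_ ?_
      · exact Finset.mem_filter.mpr ⟨mem_left hpx, hq⟩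
      · intro h
        exact hqnp (hpar_x q (Finset.mem_filter.mp h).2)
      · exact Finset.mem_filter.mpr ⟨(hmem' x).mpr ⟨hlx.1, hxy, hxnp⟩,
          (hadj' q x).mpr (Or.inr ⟨rfl, rfl⟩)⟩
      · intro h
        have := (hmem' p).mp (Finset.mem_filter.mp h).1
        exact this.2.2 rfl
      · intro c hcp hcx
        rw [Finset.mem_filter, Finset.mem_filter, hmem' c, hadj' q c]
        constructor
        · rintro ⟨hcm, hvc⟩
          have hcy : c ≠ y := fun h => hqnp (hpar_y q (h ▸ hvc))
          exact ⟨⟨hcm, hcy, hcp⟩, Or.inl ⟨hvc, hqnp, hcp, hcy⟩⟩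
        · rintro ⟨⟨hcm, hcy, -⟩, ⟨hvc, -, -, -⟩ | ⟨-, rfl⟩⟩
          · exact ⟨hcm, hvc⟩
          · exact absurd rfl hcx
    · rw [outdeg, outdeg]
      apply congrArg Finset.card
      ext c
      rw [Finset.mem_filter, Finset.mem_filter, hmem' c, hadj' v c]
      constructor
      · rintro ⟨⟨hcm, -, -⟩, ⟨hvc, -, -, -⟩ | ⟨rfl, -⟩⟩
        · exact ⟨hcm, hvc⟩
        · exact absurd rfl hvq
      · rintro ⟨hcm, hvc⟩
        have hcp : c ≠ p := fun h => hvq (hpar_p v (h ▸ hvc))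
        have hcy : c ≠ y := fun h => hvp (hpar_y v (h ▸ hvc))
        exact ⟨⟨hcm, hcy, hcp⟩, Or.inl ⟨hvc, hvp, hcp, hcy⟩⟩
  -- acyclicity
  have hlift : ∀ a b, N'.adj a b → TransGen N.adj a b := by
    intro a b hab
    rcases (hadj' a b).mp hab with ⟨hab, -, -, -⟩ | ⟨rfl, rfl⟩
    · exact TransGen.single hab
    · exact (TransGen.single hpx).head hq
  have hA' : N'.Acyclic := by
    have hgen : ∀ a b, TransGen N'.adj a b → TransGen N.adj a b := by
      intro a b h
      induction h with
      | single h => exact hlift _ _ h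
      | tail h1 h2 ih => exact ih.trans (hlift _ _ h2)
    exact fun v hv => hA v (hgen v v hv)
  -- reachability
  have hreach' : ∀ z, ReflTransGen N.adj ρ z →
      (z ≠ p ∧ z ≠ y → ReflTransGen N'.adj ρ z) ∧
      ((z = p ∨ z = y) → ReflTransGen N'.adj ρ q) := by
    intro z hz
    induction hz with
    | refl =>
      refine ⟨fun _ => ReflTransGen.refl, ?_⟩
      rintro (h | h)
      · exact absurd h.symm hpρ
      · exact absurd h.symm hyρ
    | @tail b c hb hbc ih =>
      constructor
      · rintro ⟨hcp, hcy⟩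
        by_cases hbp : b = p
        · subst hbp
          rcases hch c hbc with rfl | rfl
          · exact (ih.2 (Or.inl rfl)).tail ((hadj' q c).mpr (Or.inr ⟨rfl, rfl⟩))
          · exact absurd rfl hcy
        · by_cases hby : b = y
          · exact absurd hbc (hby ▸ not_adj_of_outdeg_zero hly.2)
          · exact (ih.1 ⟨hbp, hby⟩).tail ((hadj' b c).mpr (Or.inl ⟨hbc, hbp, hcp, hcy⟩))
      · rintro (rfl | rfl)
        · have : b = q := hpar_p b hbc
          subst this
          exact ih.1 ⟨hqnp, hqny⟩
        · have : b = p := hpar_y b hbc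
          subst this
          exact ih.2 (Or.inl rfl)
  -- assemble binary
  have hρ' : ρ ∈ N'.verts := (hmem' ρ).mpr ⟨hroot.1, fun h => hyρ h.symm, fun h => hpρ h.symm⟩
  have hbin' : N'.IsBinary := by
    refine ⟨hA', ρ, ⟨hρ', ?_⟩, ?_, ?_, ?_⟩
    · rw [hindeg ρ hρ']; exact hroot.2
    · rw [houtdeg ρ hρ']; exact houtρ
    · intro v hv
      have hvm := (hmem' v).mp hv
      exact (hreach' v (hreach v hvm.1)).1 ⟨hvm.2.2, hvm.2.1⟩
    · intro v hv hvρ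
      rw [hindeg v hv, houtdeg v hv]
      exact hclass v ((hmem' v).mp hv).1 hvρ
  -- tree-child
  have htc' : N'.TreeChild := by
    intro v hv hvout
    have hvm := (hmem' v).mp hv
    rw [houtdeg v hv] at hvout
    obtain ⟨c, hvc, hc2⟩ := htc v hvm.1 hvout
    by_cases hcp : c = p
    · subst hcp
      have hvq : v = q := hpar_p v hvc
      refine ⟨x, (hadj' v x).mpr (Or.inr ⟨hvq, rfl⟩), ?_⟩
      have hx' : x ∈ N'.verts := (hmem' x).mpr ⟨hlx.1, hxy, hxnp⟩
      rw [hindeg x hx', hx1]; omega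
    · have hcy : c ≠ y := fun h => hvm.2.2 (hpar_y v (h ▸ hvc))
      have hc' : c ∈ N'.verts := (hmem' c).mpr ⟨mem_right hvc, hcy, hcp⟩
      refine ⟨c, (hadj' v c).mpr (Or.inl ⟨hvc, hvm.2.2, hcp, hcy⟩), ?_⟩
      rw [hindeg c hc']
      exact hc2
  -- stack-free
  have hsf' : N'.StackFree := by
    rintro u v huv ⟨hu2, hv2⟩
    have hu' := (N'.adj_mem u v huv).1
    have hv' := (N'.adj_mem u v huv).2
    rw [hindeg u hu'] at hu2
    rw [hindeg v hv'] at hv2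
    rcases (hadj' u v).mp huv with ⟨huv', -, -, -⟩ | ⟨rfl, rfl⟩
    · exact hsf u v huv' ⟨hu2, hv2⟩
    · rw [hx1] at hv2; omega
  -- cardinality
  have hsub : ({y, p} : Finset ℕ) ⊆ N.verts := by
    intro z hz
    simp only [Finset.mem_insert, Finset.mem_singleton] at hz
    rcases hz with rfl | rfl
    · exact hly.1
    · exact mem_left hpx
  have hcard : N'.verts.card + 2 = N.verts.card := by
    rw [hverts', Finset.card_sdiff_of_subset hsub]
    have h2 : ({y, p} : Finset ℕ).card = 2 := by
      rw [Finset.card_insert_of_notMem (by simp [hynp]), Finset.card_singleton]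
    have := Finset.card_le_card hsub
    rw [h2] at this ⊢
    omega
  exact ⟨N', ⟨x, y, p, hxy, hlx, hly, hpx, hpy,
    Or.inr ⟨q, hq, hverts', fun u v => hadj' u v⟩⟩, hbin', htc', hsf', hcard⟩

end PNet
namespace PNet

open Relation
open scoped Classical

variable {N : PNet}

lemma reach_leaf {v z : ℕ} (hl : N.outdeg v = 0) (h : ReflTransGen N.adj v z) : z = v := by
  cases h.cases_head with
  | inl h' => exact h'.symm
  | inr h' => obtain ⟨c, hc, -⟩ := h'; exact absurd hc (not_adj_of_outdeg_zero hl)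

lemma ret_step {ρ x y w p q' : ℕ} (hA : N.Acyclic) (hroot : N.IsRoot ρ)
    (houtρ : N.outdeg ρ = 2) (hreach : ∀ z ∈ N.verts, ReflTransGen N.adj ρ z)
    (hclass : ∀ v ∈ N.verts, v ≠ ρ →
      (N.indeg v = 1 ∧ N.outdeg v = 2) ∨ (N.indeg v = 2 ∧ N.outdeg v = 1) ∨
      (N.indeg v = 1 ∧ N.outdeg v = 0))
    (htc : N.TreeChild) (hsf : N.StackFree)
    (hxy : x ≠ y) (hlx : N.IsLeaf x) (hly : N.IsLeaf y)
    (hwx : N.adj w x) (hw2 : N.indeg w = 2) (hpw : N.adj p w) (hpy : N.adj p y)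
    (hple : N.indeg p ≤ 1) (hq'p : q' ≠ p) (hq'w : N.adj q' w) :
    ∃ N' : PNet, N.RetCherryPick N' ∧ N'.IsBinary ∧ N'.TreeChild ∧ N'.StackFree ∧
      N'.verts.card + 2 = N.verts.card := by
  -- p is not the root
  have hwny : w ≠ y := fun h => not_adj_of_outdeg_zero hly.2 (h ▸ hwx)
  have hp0 : N.indeg p ≠ 0 := by
    intro hp0
    have hpρ : p = ρ := by
      by_contra hne
      rcases hclass p (mem_left hpw) hne with ⟨h, -⟩ | ⟨h, -⟩ | ⟨h, -⟩ <;> omega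
    have hp2 : N.outdeg p = 2 := hpρ ▸ houtρ
    have hchp := children_cases hp2 hpw hpy hwny
    have hdesc : ∀ z, ReflTransGen N.adj ρ z →
        z = p ∨ z = y ∨ ReflTransGen N.adj w z := by
      intro z hz
      induction hz with
      | refl => exact Or.inl hpρ.symm
      | @tail b c hb hbc ih =>
        rcases ih with rfl | rfl | hw
        · rcases hchp c hbc with rfl | rfl
          · exact Or.inr (Or.inr ReflTransGen.refl)
          · exact Or.inr (Or.inl rfl)
        · exact absurd hbc (not_adj_of_outdeg_zero hly.2)
        · exact Or.inr (Or.inr (hw.tail hbc))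
    rcases hdesc q' (hreach q' (mem_left hq'w)) with h | h | h
    · exact hq'p h
    · exact not_adj_of_outdeg_zero hly.2 (h ▸ hq'w)
    · exact hA w (TransGen.trans_right h (TransGen.single hq'w))
  have hp1 : N.indeg p = 1 := by omega
  obtain ⟨q0, hq0⟩ := Finset.card_ne_zero.mp (by rw [← indeg]; omega :
    (N.verts.filter fun u => N.adj u p).card ≠ 0)
  have hq : N.adj q0 p := (Finset.mem_filter.mp hq0).2
  set q := q0 with hqdef
  -- basic facts
  have hpρ : p ≠ ρ := fun h => hp0 (h ▸ hroot.2)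
  have hwρ : w ≠ ρ := fun h => by rw [h, hroot.2] at hw2; omega
  have hxρ : x ≠ ρ := fun h => indeg_ne_zero hwx (h ▸ hroot.2)
  have hyρ : y ≠ ρ := fun h => indeg_ne_zero hpy (h ▸ hroot.2)
  have how1 : N.outdeg w = 1 := by
    rcases hclass w (mem_right hpw) hwρ with ⟨h, -⟩ | ⟨-, h⟩ | ⟨h, -⟩ <;> omega
  have hchw : ∀ c, N.adj w c → c = x := fun c hc => child_unique how1 hwx hc
  have hp2 : N.outdeg p = 2 := by
    rcases hclass p (mem_left hpw) hpρ with ⟨-, h⟩ | ⟨h, -⟩ | ⟨-, h⟩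
    · exact h
    · omega
    · exact absurd hpw (not_adj_of_outdeg_zero h)
  have hchp := children_cases hp2 hpw hpy hwny
  have hparw : ∀ a, N.adj a w → a = p ∨ a = q' :=
    fun a ha => parents_cases hw2 hpw hq'w (fun h => hq'p h.symm) a ha
  have hx1 : N.indeg x = 1 := by
    rcases hclass x hlx.1 hxρ with ⟨h, -⟩ | ⟨h, h'⟩ | ⟨h, -⟩
    · exact h
    · exact absurd hlx.2 (by omega)
    · exact h
  have hy1 : N.indeg y = 1 := by
    rcases hclass y hly.1 hyρ with ⟨h, -⟩ | ⟨h, h'⟩ | ⟨h, -⟩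
    · exact h
    · exact absurd hly.2 (by omega)
    · exact h
  have hpar_x : ∀ a, N.adj a x → a = w := fun a ha => parent_unique hx1 hwx ha
  have hpar_y : ∀ a, N.adj a y → a = p := fun a ha => parent_unique hy1 hpy ha
  have hpar_p : ∀ a, N.adj a p → a = q := fun a ha => parent_unique hp1 hq ha
  have hpnw : p ≠ w := adj_ne hA hpw
  have hpny : p ≠ y := adj_ne hA hpy
  have hwnx : w ≠ x := adj_ne hA hwx
  have hq'nw : q' ≠ w := adj_ne hA hq'w
  have hqnp : q ≠ p := adj_ne hA hq
  have hqnw : q ≠ w := fun h => hA p ((TransGen.single hpw).tail (h ▸ hq))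
  have hqny : q ≠ y := fun h => not_adj_of_outdeg_zero hly.2 (h ▸ hq)
  have hq'ny : q' ≠ y := fun h => not_adj_of_outdeg_zero hly.2 (h ▸ hq'w)
  have hxnw : x ≠ w := fun h => hwnx h.symm
  have hxnp : x ≠ p := fun h => hA p ((TransGen.single hpw).tail (h ▸ hwx))
  have hynw : y ≠ w := fun h => hwny h.symm
  have hynp : y ≠ p := fun h => hpny h.symm
  have hwnp : w ≠ p := fun h => hpnw h.symm
  -- the reduced network
  have hadjmem : ∀ u v,
      ((N.adj u v ∧ u ≠ w ∧ v ≠ w ∧ u ≠ p ∧ v ≠ p) ∨ (u = q' ∧ v = x) ∨ (u = q ∧ v = y)) →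
      u ∈ N.verts \ ({w, p} : Finset ℕ) ∧ v ∈ N.verts \ ({w, p} : Finset ℕ) := by
    rintro u v (⟨huv, huw, hvw, hup, hvp⟩ | ⟨rfl, rfl⟩ | ⟨rfl, rfl⟩) <;>
      simp only [Finset.mem_sdiff, Finset.mem_insert, Finset.mem_singleton]
    · exact ⟨⟨mem_left huv, by rintro (rfl | rfl); exacts [huw rfl, hup rfl]⟩,
        ⟨mem_right huv, by rintro (rfl | rfl); exacts [hvw rfl, hvp rfl]⟩⟩
    · exact ⟨⟨mem_left hq'w, by rintro (rfl | rfl); exacts [hq'nw rfl, hq'p rfl]⟩,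
        ⟨hlx.1, by rintro (rfl | rfl); exacts [hxnw rfl, hxnp rfl]⟩⟩
    · exact ⟨⟨mem_left hq, by rintro (rfl | rfl); exacts [hqnw rfl, hqnp rfl]⟩,
        ⟨hly.1, by rintro (rfl | rfl); exacts [hynw rfl, hynp rfl]⟩⟩
  obtain ⟨N', hverts', hadj'⟩ : ∃ N' : PNet, N'.verts = N.verts \ ({w, p} : Finset ℕ) ∧
      ∀ u v, N'.adj u v ↔
        ((N.adj u v ∧ u ≠ w ∧ v ≠ w ∧ u ≠ p ∧ v ≠ p) ∨ (u = q' ∧ v = x) ∨ (u = q ∧ v = y)) :=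
    ⟨{ verts := N.verts \ ({w, p} : Finset ℕ)
       adj := fun u v =>
         (N.adj u v ∧ u ≠ w ∧ v ≠ w ∧ u ≠ p ∧ v ≠ p) ∨ (u = q' ∧ v = x) ∨ (u = q ∧ v = y)
       adjDec := fun u v => Classical.propDecidable _
       adj_mem := hadjmem }, rfl, fun _ _ => Iff.rfl⟩
  have hmem' : ∀ z, z ∈ N'.verts ↔ (z ∈ N.verts ∧ z ≠ w ∧ z ≠ p) := by
    intro z
    rw [hverts']
    simp only [Finset.mem_sdiff, Finset.mem_insert, Finset.mem_singleton]
    tauto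
  -- in-degrees
  have hindeg : ∀ v ∈ N'.verts, N'.indeg v = N.indeg v := by
    intro v hv
    obtain ⟨hvm, hvw, hvp⟩ := (hmem' v).mp hv
    by_cases hvx : v = x
    · rw [hvx, indeg, hx1]
      refine Finset.card_eq_one.mpr ⟨q', ?_⟩
      ext u
      rw [Finset.mem_filter, Finset.mem_singleton, hmem' u, hadj' u x]
      constructor
      · rintro ⟨⟨hum, huw, hup⟩, ⟨huv, -, -, -, -⟩ | ⟨rfl, -⟩ | ⟨rfl, h⟩⟩
        · exact absurd (hpar_x u huv) huw
        · rfl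
        · exact absurd h hxy
      · rintro rfl
        exact ⟨⟨mem_left hq'w, hq'nw, hq'p⟩, Or.inr (Or.inl ⟨rfl, rfl⟩)⟩
    · by_cases hvy : v = y
      · rw [hvy, indeg, hy1]
        refine Finset.card_eq_one.mpr ⟨q, ?_⟩
        ext u
        rw [Finset.mem_filter, Finset.mem_singleton, hmem' u, hadj' u y]
        constructor
        · rintro ⟨⟨hum, huw, hup⟩, ⟨huv, -, -, -, -⟩ | ⟨rfl, h⟩ | ⟨rfl, -⟩⟩
          · exact absurd (hpar_y u huv) hup
          · exact absurd h hxy.symm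
          · rfl
        · rintro rfl
          exact ⟨⟨mem_left hq, hqnw, hqnp⟩, Or.inr (Or.inr ⟨rfl, rfl⟩)⟩
      · rw [indeg, indeg]
        apply congrArg Finset.card
        ext u
        rw [Finset.mem_filter, Finset.mem_filter, hmem' u, hadj' u v]
        constructor
        · rintro ⟨⟨hum, -, -⟩, ⟨huv, -, -, -, -⟩ | ⟨-, rfl⟩ | ⟨-, rfl⟩⟩
          · exact ⟨hum, huv⟩
          · exact absurd rfl hvx
          · exact absurd rfl hvy
        · rintro ⟨hum, huv⟩
          have huw : u ≠ w := fun h => hvx (hchw v (h ▸ huv))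
          have hup : u ≠ p := fun h => by
            rcases hchp v (h ▸ huv) with rfl | rfl
            · exact hvw rfl
            · exact hvy rfl
          exact ⟨⟨hum, huw, hup⟩, Or.inl ⟨huv, huw, hvw, hup, hvp⟩⟩
  -- out-degrees
  have houtdeg : ∀ v ∈ N'.verts, N'.outdeg v = N.outdeg v := by
    intro v hv
    obtain ⟨hvm, hvw, hvp⟩ := (hmem' v).mp hv
    by_cases hvq' : v = q'
    · by_cases hq'q : q' = q
      · -- v = q' = q : children lose w and p, gain x and y
        rw [hvq', outdeg, outdeg]
        refine card_swap2 (p := w) (w := p) (x := x) (y := y) hwnp hxy hwnx hwny hxnp.symm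
          hpny ?_ ?_ ?_ ?_ ?_ ?_ ?_ ?_ ?_
        · exact Finset.mem_filter.mpr ⟨mem_right hpw, hq'w⟩
        · exact Finset.mem_filter.mpr ⟨mem_left hpw, hq'q ▸ (hq'q.symm ▸ hq : N.adj q' p)⟩
        · intro h
          exact hq'nw (hpar_x q' (Finset.mem_filter.mp h).2)
        · intro h
          exact hq'p (hpar_y q' (Finset.mem_filter.mp h).2)
        · exact Finset.mem_filter.mpr ⟨(hmem' x).mpr ⟨hlx.1, hxnw, hxnp⟩,
            (hadj' q' x).mpr (Or.inr (Or.inl ⟨rfl, rfl⟩))⟩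
        · exact Finset.mem_filter.mpr ⟨(hmem' y).mpr ⟨hly.1, hynw, hynp⟩,
            (hadj' q' y).mpr (Or.inr (Or.inr ⟨hq'q, rfl⟩))⟩
        · intro h
          exact ((hmem' w).mp (Finset.mem_filter.mp h).1).2.1 rfl
        · intro h
          exact ((hmem' p).mp (Finset.mem_filter.mp h).1).2.2 rfl
        · intro c hcw hcp hcx hcy
          rw [Finset.mem_filter, Finset.mem_filter, hmem' c, hadj' q' c]
          constructor
          · rintro ⟨hcm, hvc⟩
            exact ⟨⟨hcm, hcw, hcp⟩, Or.inl ⟨hvc, hq'nw, hcw, hq'p, hcp⟩⟩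
          · rintro ⟨⟨hcm, -, -⟩, ⟨hvc, -, -, -, -⟩ | ⟨-, rfl⟩ | ⟨-, rfl⟩⟩
            · exact ⟨hcm, hvc⟩
            · exact absurd rfl hcx
            · exact absurd rfl hcy
      · -- v = q' ≠ q : children lose w, gain x
        rw [hvq', outdeg, outdeg]
        refine card_swap (p := w) (x := x) hwnx ?_ ?_ ?_ ?_ ?_
        · exact Finset.mem_filter.mpr ⟨mem_right hpw, hq'w⟩
        · intro h
          exact hq'nw (hpar_x q' (Finset.mem_filter.mp h).2)
        · exact Finset.mem_filter.mpr ⟨(hmem' x).mpr ⟨hlx.1, hxnw, hxnp⟩,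
            (hadj' q' x).mpr (Or.inr (Or.inl ⟨rfl, rfl⟩))⟩
        · intro h
          exact ((hmem' w).mp (Finset.mem_filter.mp h).1).2.1 rfl
        · intro c hcw hcx
          rw [Finset.mem_filter, Finset.mem_filter, hmem' c, hadj' q' c]
          constructor
          · rintro ⟨hcm, hvc⟩
            have hcp : c ≠ p := fun h => hq'q (hpar_p q' (h ▸ hvc))
            exact ⟨⟨hcm, hcw, hcp⟩, Or.inl ⟨hvc, hq'nw, hcw, hq'p, hcp⟩⟩
          · rintro ⟨⟨hcm, -, -⟩, ⟨hvc, -, -, -, -⟩ | ⟨-, rfl⟩ | ⟨h, rfl⟩⟩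
            · exact ⟨hcm, hvc⟩
            · exact absurd rfl hcx
            · exact absurd h hq'q
    · by_cases hvq : v = q
      · -- v = q ≠ q' : children lose p, gain y
        rw [hvq, outdeg, outdeg]
        refine card_swap (p := p) (x := y) hpny ?_ ?_ ?_ ?_ ?_
        · exact Finset.mem_filter.mpr ⟨mem_left hpw, hq⟩
        · intro h
          exact hqnp (hpar_y q (Finset.mem_filter.mp h).2)
        · exact Finset.mem_filter.mpr ⟨(hmem' y).mpr ⟨hly.1, hynw, hynp⟩,
            (hadj' q y).mpr (Or.inr (Or.inr ⟨rfl, rfl⟩))⟩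
        · intro h
          exact ((hmem' p).mp (Finset.mem_filter.mp h).1).2.2 rfl
        · intro c hcp hcy
          rw [Finset.mem_filter, Finset.mem_filter, hmem' c, hadj' q c]
          constructor
          · rintro ⟨hcm, hvc⟩
            have hcw : c ≠ w := fun h => by
              rcases hparw q (h ▸ hvc) with h' | h'
              · exact hqnp h'
              · exact hvq' (hvq.trans h')
            exact ⟨⟨hcm, hcw, hcp⟩, Or.inl ⟨hvc, hqnw, hcw, hqnp, hcp⟩⟩
          · rintro ⟨⟨hcm, -, -⟩, ⟨hvc, -, -, -, -⟩ | ⟨h, rfl⟩ | ⟨-, rfl⟩⟩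
            · exact ⟨hcm, hvc⟩
            · exact absurd (hvq.trans h) hvq'
            · exact absurd rfl hcy
      · -- other vertices keep their children
        rw [outdeg, outdeg]
        apply congrArg Finset.card
        ext c
        rw [Finset.mem_filter, Finset.mem_filter, hmem' c, hadj' v c]
        constructor
        · rintro ⟨⟨hcm, -, -⟩, ⟨hvc, -, -, -, -⟩ | ⟨rfl, -⟩ | ⟨rfl, -⟩⟩
          · exact ⟨hcm, hvc⟩
          · exact absurd rfl hvq'
          · exact absurd rfl hvq
        · rintro ⟨hcm, hvc⟩
          have hcw : c ≠ w := fun h => by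
            rcases hparw v (h ▸ hvc) with rfl | rfl
            · exact hvp rfl
            · exact hvq' rfl
          have hcp : c ≠ p := fun h => hvq (hpar_p v (h ▸ hvc))
          exact ⟨⟨hcm, hcw, hcp⟩, Or.inl ⟨hvc, hvw, hcw, hvp, hcp⟩⟩
  -- acyclicity
  have hlift : ∀ a b, N'.adj a b → TransGen N.adj a b := by
    intro a b hab
    rcases (hadj' a b).mp hab with ⟨hab, -, -, -, -⟩ | ⟨rfl, rfl⟩ | ⟨rfl, rfl⟩
    · exact TransGen.single hab
    · exact (TransGen.single hwx).head hq'w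
    · exact (TransGen.single hpy).head hq
  have hA' : N'.Acyclic := by
    have hgen : ∀ a b, TransGen N'.adj a b → TransGen N.adj a b := by
      intro a b h
      induction h with
      | single h => exact hlift _ _ h
      | tail h1 h2 ih => exact ih.trans (hlift _ _ h2)
    exact fun v hv => hA v (hgen v v hv)
  -- reachability
  have hDla : ∀ z, ReflTransGen N.adj ρ z → ¬ ReflTransGen N.adj w z →
      ¬ ReflTransGen N.adj p z → ReflTransGen N'.adj ρ z := by
    intro z hz
    induction hz with
    | refl => intro _ _; exact ReflTransGen.refl
    | @tail b c hb hbc ih =>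
      intro hnw hnp
      have hnwb : ¬ ReflTransGen N.adj w b := fun h => hnw (h.tail hbc)
      have hnpb : ¬ ReflTransGen N.adj p b := fun h => hnp (h.tail hbc)
      refine (ih hnwb hnpb).tail ((hadj' b c).mpr (Or.inl ⟨hbc, ?_, ?_, ?_, ?_⟩))
      · rintro rfl; exact hnwb ReflTransGen.refl
      · rintro rfl; exact hnw ReflTransGen.refl
      · rintro rfl; exact hnpb ReflTransGen.refl
      · rintro rfl; exact hnp ReflTransGen.refl
  have hnwq' : ¬ ReflTransGen N.adj w q' :=
    fun h => hA w (TransGen.trans_right h (TransGen.single hq'w))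
  have hnpq' : ¬ ReflTransGen N.adj p q' := by
    intro h
    cases h.cases_head with
    | inl h' => exact hq'p h'.symm
    | inr h' =>
      obtain ⟨c, hc, hcr⟩ := h'
      rcases hchp c hc with rfl | rfl
      · exact hnwq' hcr
      · exact not_adj_of_outdeg_zero hly.2 ((reach_leaf hly.2 hcr) ▸ hq'w)
  have hnwq : ¬ ReflTransGen N.adj w q := by
    intro h
    cases h.cases_head with
    | inl h' => exact hqnw h'.symm
    | inr h' =>
      obtain ⟨c, hc, hcr⟩ := h'
      rw [hchw c hc] at hcr
      exact not_adj_of_outdeg_zero hlx.2 ((reach_leaf hlx.2 hcr) ▸ hq)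
  have hnpq : ¬ ReflTransGen N.adj p q :=
    fun h => hA p (TransGen.trans_right h (TransGen.single hq))
  have hreachq' : ReflTransGen N'.adj ρ q' :=
    hDla q' (hreach q' (mem_left hq'w)) hnwq' hnpq'
  have hreachq : ReflTransGen N'.adj ρ q :=
    hDla q (hreach q (mem_left hq)) hnwq hnpq
  have hreach' : ∀ z, ReflTransGen N.adj ρ z →
      z = w ∨ z = p ∨ ReflTransGen N'.adj ρ z := by
    intro z hz
    induction hz with
    | refl => exact Or.inr (Or.inr ReflTransGen.refl)
    | @tail b c hb hbc ih =>
      by_cases hcw : c = w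
      · exact Or.inl hcw
      · by_cases hcp : c = p
        · exact Or.inr (Or.inl hcp)
        · refine Or.inr (Or.inr ?_)
          by_cases hbw : b = w
          · rw [hchw c (hbw ▸ hbc)]
            exact hreachq'.tail ((hadj' q' x).mpr (Or.inr (Or.inl ⟨rfl, rfl⟩)))
          · by_cases hbp : b = p
            · rcases hchp c (hbp ▸ hbc) with h | h
              · exact absurd h hcw
              · exact hreachq.tail ((hadj' q c).mpr (Or.inr (Or.inr ⟨rfl, h⟩)))
            · rcases ih with rfl | rfl | hpath
              · exact absurd rfl hbw
              · exact absurd rfl hbp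
              · exact hpath.tail ((hadj' b c).mpr (Or.inl ⟨hbc, hbw, hcw, hbp, hcp⟩))
  -- binary
  have hρ' : ρ ∈ N'.verts :=
    (hmem' ρ).mpr ⟨hroot.1, fun h => hwρ h.symm, fun h => hpρ h.symm⟩
  have hbin' : N'.IsBinary := by
    refine ⟨hA', ρ, ⟨hρ', ?_⟩, ?_, ?_, ?_⟩
    · rw [hindeg ρ hρ']; exact hroot.2
    · rw [houtdeg ρ hρ']; exact houtρ
    · intro v hv
      obtain ⟨hvm, hvw, hvp⟩ := (hmem' v).mp hv
      rcases hreach' v (hreach v hvm) with rfl | rfl | hpath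
      · exact absurd rfl hvw
      · exact absurd rfl hvp
      · exact hpath
    · intro v hv hvρ
      rw [hindeg v hv, houtdeg v hv]
      exact hclass v ((hmem' v).mp hv).1 hvρ
  -- tree-child
  have htc' : N'.TreeChild := by
    intro v hv hvout
    obtain ⟨hvm, hvw, hvp⟩ := (hmem' v).mp hv
    rw [houtdeg v hv] at hvout
    obtain ⟨c, hvc, hc2⟩ := htc v hvm hvout
    have hcw : c ≠ w := fun h => hc2 (h ▸ hw2)
    by_cases hcp : c = p
    · have hvq : v = q := hpar_p v (hcp ▸ hvc)
      refine ⟨y, (hadj' v y).mpr (Or.inr (Or.inr ⟨hvq, rfl⟩)), ?_⟩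
      have hy' : y ∈ N'.verts := (hmem' y).mpr ⟨hly.1, hynw, hynp⟩
      rw [hindeg y hy', hy1]; omega
    · have hc' : c ∈ N'.verts := (hmem' c).mpr ⟨mem_right hvc, hcw, hcp⟩
      refine ⟨c, (hadj' v c).mpr (Or.inl ⟨hvc, hvw, hcw, hvp, hcp⟩), ?_⟩
      rw [hindeg c hc']
      exact hc2
  -- stack-free
  have hsf' : N'.StackFree := by
    rintro u v huv ⟨hu2, hv2⟩
    have hu' := (N'.adj_mem u v huv).1
    have hv' := (N'.adj_mem u v huv).2
    rw [hindeg u hu'] at hu2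
    rw [hindeg v hv'] at hv2
    rcases (hadj' u v).mp huv with ⟨huv', -, -, -, -⟩ | ⟨-, rfl⟩ | ⟨-, rfl⟩
    · exact hsf u v huv' ⟨hu2, hv2⟩
    · rw [hx1] at hv2; omega
    · rw [hy1] at hv2; omega
  -- cardinality
  have hsub : ({w, p} : Finset ℕ) ⊆ N.verts := by
    intro z hz
    simp only [Finset.mem_insert, Finset.mem_singleton] at hz
    rcases hz with rfl | rfl
    · exact mem_right hpw
    · exact mem_left hpw
  have hcard : N'.verts.card + 2 = N.verts.card := by
    rw [hverts', Finset.card_sdiff_of_subset hsub]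
    have h2 : ({w, p} : Finset ℕ).card = 2 := by
      rw [Finset.card_insert_of_notMem (by simp [hwnp]), Finset.card_singleton]
    have := Finset.card_le_card hsub
    rw [h2] at this ⊢
    omega
  exact ⟨N', ⟨x, y, w, p, hxy, hlx, hly, hwx, hw2, hpw, hpy, hple, q', hq'p, hq'w,
    Or.inr ⟨q, hq, hverts', fun u v => hadj' u v⟩⟩, hbin', htc', hsf', hcard⟩

end PNet
namespace PNet

open Relation
open scoped Classical

lemma orchard_main : ∀ n (M : PNet), M.IsBinary → M.TreeChild → M.StackFree →
    M.verts.card ≤ n → M.Orchard := by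
  intro n
  induction n with
  | zero =>
    intro M hbin _ _ hc
    obtain ⟨-, ρ, hroot, -⟩ := hbin
    have := Finset.card_pos.mpr ⟨ρ, hroot.1⟩
    omega
  | succ n ih =>
    intro M hbin htc hsf hc
    have hrp := exists_rp hbin htc hsf
    obtain ⟨hA, ρ, hroot, houtρ, hreach, hclass⟩ := hbin
    rcases hrp with ⟨x, y, p, hxy, hlx, hly, hpx, hpy⟩ |
      ⟨x, y, w, p, q', hxy, hlx, hly, hwx, hw2, hpw, hpy, hple, hq'p, hq'w⟩
    · by_cases hp0 : M.indeg p = 0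
      · exact cherry_root_case hA hroot houtρ hreach hclass hxy hlx hly hpx hpy hp0
      · obtain ⟨q, hqm⟩ := Finset.card_ne_zero.mp
          (show (M.verts.filter fun u => M.adj u p).card ≠ 0 by rw [← indeg]; exact hp0)
        have hq : M.adj q p := (Finset.mem_filter.mp hqm).2
        obtain ⟨N', hcp, hbin', htc', hsf', hcard⟩ :=
          cherry_step hA hroot houtρ hreach hclass htc hsf hxy hlx hly hpx hpy hq
        obtain ⟨T, hT, hchain⟩ := ih N' hbin' htc' hsf' (by omega)
        exact ⟨T, hT, hchain.head (Or.inl hcp)⟩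
    · obtain ⟨N', hcp, hbin', htc', hsf', hcard⟩ :=
        ret_step hA hroot houtρ hreach hclass htc hsf hxy hlx hly hwx hw2 hpw hpy
          hple hq'p hq'w
      obtain ⟨T, hT, hchain⟩ := ih N' hbin' htc' hsf' (by omega)
      exact ⟨T, hT, hchain.head (Or.inr hcp)⟩

end PNet

open PNet in
/-- For a binary level-1 network (every blob contains at most one reticulation
node): it is tree-child iff it is stack-free, and it is orchard. -/
theorem stmt18 (N : PNet) (hbin : N.IsBinary)
    (hlvl : ∀ B ∈ N.Blobs, N.blobLevel B ≤ 1) :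
    (N.TreeChild ↔ N.StackFree) ∧ N.Orchard := by
  have htc := tc_of_level1 hbin hlvl
  have hsf := sf_of_level1 hbin hlvl
  exact ⟨iff_of_true htc hsf, orchard_main N.verts.card N hbin htc hsf le_rfl⟩
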